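/- Let f : [0,∞) → ℝ be a C² function with f integrable on (0,∞), f′ ≤ 0, f″ ≥ 0 on (0,∞), and f(x) → 0 and f′(x) → 0 as x → ∞. Then for every ξ > 0, ∫₀^∞ f(x) cos(ξx) dx = (1/ξ²) ∫₀^∞ f″(x) (1 − cos(ξx)) dx, and in particular ∫₀^∞ f(x) cos(ξx) dx ≥ 0. -/

import Mathlib

open MeasureTheory Set Filter Real

/-- Pólya-type positivity: if `f : [0,∞) → ℝ` is C², integrable, decreasing and convex
on `(0,∞)`, with `f(x) → 0` and `f'(x) → 0` as `x → ∞`, then for every `ξ > 0`,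
`∫₀^∞ f(x) cos(ξx) dx = (1/ξ²) ∫₀^∞ f''(x)(1 - cos(ξx)) dx ≥ 0`. -/
theorem statement19 (f : ℝ → ℝ)
    (hf : ContDiffOn ℝ 2 f (Ici 0))
    (hint : IntegrableOn f (Ioi 0))
    (hf' : ∀ x : ℝ, 0 < x → deriv f x ≤ 0)
    (hf'' : ∀ x : ℝ, 0 < x → 0 ≤ deriv (deriv f) x)
    (hf0 : Tendsto f atTop (nhds 0))
    (hf'0 : Tendsto (deriv f) atTop (nhds 0)) :
    ∀ ξ : ℝ, 0 < ξ →
      (∫ x in Ioi (0:ℝ), f x * Real.cos (ξ * x))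
          = (1 / ξ ^ 2) * ∫ x in Ioi (0:ℝ), deriv (deriv f) x * (1 - Real.cos (ξ * x)) ∧
        0 ≤ ∫ x in Ioi (0:ℝ), f x * Real.cos (ξ * x) := by
  -- basic differentiability facts on the open half line
  have hopen : ContDiffOn ℝ 2 f (Ioi 0) := hf.mono Ioi_subset_Ici_self
  have hderivf : ∀ x ∈ Ioi (0:ℝ), HasDerivAt f (deriv f x) x := by
    intro x hx
    exact ((hopen.differentiableOn (by norm_num)).differentiableAt
      (isOpen_Ioi.mem_nhds hx)).hasDerivAt
  have hC1 : ContDiffOn ℝ 1 (deriv f) (Ioi 0) :=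
    hopen.deriv_of_isOpen isOpen_Ioi (le_of_eq (by norm_num))
  have hderiv2 : ∀ x ∈ Ioi (0:ℝ), HasDerivAt (deriv f) (deriv (deriv f) x) x := by
    intro x hx
    exact ((hC1.differentiableOn (by norm_num)).differentiableAt
      (isOpen_Ioi.mem_nhds hx)).hasDerivAt
  -- the one-sided derivative g = derivWithin f (Ici 0), continuous up to 0
  set g : ℝ → ℝ := derivWithin f (Ici 0) with hg_def
  have hg_eq : ∀ x ∈ Ioi (0:ℝ), g x = deriv f x := fun x hx =>
    derivWithin_of_mem_nhds (Ici_mem_nhds hx)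
  have hgcont : ContinuousOn g (Ici 0) :=
    hf.continuousOn_derivWithin (uniqueDiffOn_Ici 0) (by norm_num)
  have hgderiv : ∀ x ∈ Ioi (0:ℝ), HasDerivAt g (deriv (deriv f) x) x := by
    intro x hx
    refine (hderiv2 x hx).congr_of_eventuallyEq ?_
    filter_upwards [isOpen_Ioi.mem_nhds hx] with y hy using hg_eq y hy
  have hgtop : Tendsto g atTop (nhds 0) := by
    refine hf'0.congr' ?_
    filter_upwards [Ioi_mem_atTop (0:ℝ)] with x hx using (hg_eq x hx).symm
  -- f'' is integrable on (0, ∞)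
  have hf''int : IntegrableOn (deriv (deriv f)) (Ioi 0) :=
    integrableOn_Ioi_deriv_of_nonneg (hgcont 0 self_mem_Ici) hgderiv
      (fun x hx => hf'' x hx) hgtop
  intro ξ hξ
  have hξ2 : (ξ:ℝ)^2 ≠ 0 := pow_ne_zero _ hξ.ne'
  -- integrability of the two integrands
  have hI1 : IntegrableOn (fun x => f x * Real.cos (ξ * x)) (Ioi 0) := by
    have : IntegrableOn (fun x => Real.cos (ξ * x) * f x) (Ioi 0) :=
      hint.bdd_mul (c := 1) (Continuous.aestronglyMeasurable (by fun_prop))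
        (ae_of_all _ fun x => by simpa using Real.abs_cos_le_one (ξ * x))
    simpa [mul_comm] using this
  have hI2 : IntegrableOn (fun x => deriv (deriv f) x * (1 - Real.cos (ξ * x))) (Ioi 0) := by
    have : IntegrableOn (fun x => (1 - Real.cos (ξ * x)) * deriv (deriv f) x) (Ioi 0) := by
      refine hf''int.bdd_mul (c := 2) (Continuous.aestronglyMeasurable (by fun_prop)) (ae_of_all _ fun x => ?_)
      have h1 := Real.neg_one_le_cos (ξ * x)
      have h2 := Real.cos_le_one (ξ * x)
      rw [Real.norm_eq_abs, abs_le]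
      constructor <;> nlinarith
    simpa [mul_comm] using this
  -- the antiderivative
  set H : ℝ → ℝ := fun x => f x * (Real.sin (ξ * x) / ξ) + g x * ((Real.cos (ξ * x) - 1) / ξ^2)
    with hH_def
  have hH0 : H 0 = 0 := by simp [hH_def]
  have hHcont : ContinuousWithinAt H (Ici 0) 0 := by
    have : ContinuousOn H (Ici 0) := by
      apply ContinuousOn.add
      · exact (hf.continuousOn).mul (Continuous.continuousOn (by fun_prop))
      · exact hgcont.mul (Continuous.continuousOn (by fun_prop))
    exact this 0 self_mem_Ici
  have hHtop : Tendsto H atTop (nhds 0) := by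
    have h1 : Tendsto (fun x => f x * (Real.sin (ξ * x) / ξ)) atTop (nhds 0) := by
      refine hf0.zero_mul_isBoundedUnder_le ?_
      refine isBoundedUnder_of ⟨1/ξ, fun x => ?_⟩
      simp only [Function.comp, Real.norm_eq_abs, abs_div, abs_of_pos hξ]
      gcongr
      exact Real.abs_sin_le_one (ξ * x)
    have h2 : Tendsto (fun x => g x * ((Real.cos (ξ * x) - 1) / ξ^2)) atTop (nhds 0) := by
      refine hgtop.zero_mul_isBoundedUnder_le ?_
      refine isBoundedUnder_of ⟨2/ξ^2, fun x => ?_⟩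
      simp only [Function.comp, Real.norm_eq_abs, abs_div, abs_of_pos (pow_pos hξ 2)]
      gcongr
      have h1 := Real.neg_one_le_cos (ξ * x)
      have h2 := Real.cos_le_one (ξ * x)
      rw [abs_le]; constructor <;> nlinarith
    simpa using h1.add h2
  -- H is an antiderivative of the difference of the integrands
  have hHderiv : ∀ x ∈ Ioi (0:ℝ), HasDerivAt H
      (f x * Real.cos (ξ * x) - (1/ξ^2) * (deriv (deriv f) x * (1 - Real.cos (ξ * x)))) x := by
    intro x hx
    have hlin : HasDerivAt (fun y : ℝ => ξ * y) ξ x := by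
      simpa using (hasDerivAt_id x).const_mul ξ
    have hsin : HasDerivAt (fun y => Real.sin (ξ * y)) (Real.cos (ξ * x) * ξ) x :=
      (Real.hasDerivAt_sin (ξ * x)).comp x hlin
    have hcos : HasDerivAt (fun y => Real.cos (ξ * y)) (-Real.sin (ξ * x) * ξ) x :=
      (Real.hasDerivAt_cos (ξ * x)).comp x hlin
    have hA : HasDerivAt (fun y => f y * (Real.sin (ξ * y) / ξ))
        (deriv f x * (Real.sin (ξ * x) / ξ) + f x * (Real.cos (ξ * x) * ξ / ξ)) x :=
      (hderivf x hx).mul (hsin.div_const ξ)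
    have hB : HasDerivAt (fun y => g y * ((Real.cos (ξ * y) - 1) / ξ^2))
        (deriv (deriv f) x * ((Real.cos (ξ * x) - 1) / ξ^2) +
          g x * (-Real.sin (ξ * x) * ξ / ξ^2)) x :=
      (hgderiv x hx).mul ((hcos.sub_const 1).div_const (ξ^2))
    have := hA.add hB
    rw [hg_eq x hx] at this
    refine this.congr_deriv ?_
    field_simp [hξ.ne']
    ring
  -- FTC on (0, ∞)
  have key : (∫ x in Ioi (0:ℝ),
      (f x * Real.cos (ξ * x) - (1/ξ^2) * (deriv (deriv f) x * (1 - Real.cos (ξ * x))))) = 0 := by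
    rw [integral_Ioi_of_hasDerivAt_of_tendsto hHcont hHderiv
      (hI1.sub (hI2.const_mul (1/ξ^2))) hHtop, hH0, sub_zero]
  have hsplit : (∫ x in Ioi (0:ℝ), f x * Real.cos (ξ * x))
      = ∫ x in Ioi (0:ℝ), (1/ξ^2) * (deriv (deriv f) x * (1 - Real.cos (ξ * x))) := by
    have := integral_sub hI1 (hI2.const_mul (1/ξ^2))
    rw [key] at this
    linarith [this]
  have heq : (∫ x in Ioi (0:ℝ), f x * Real.cos (ξ * x))
      = (1 / ξ ^ 2) * ∫ x in Ioi (0:ℝ), deriv (deriv f) x * (1 - Real.cos (ξ * x)) := by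
    rw [hsplit, integral_const_mul]
  refine ⟨heq, ?_⟩
  rw [heq]
  apply mul_nonneg (by positivity)
  apply setIntegral_nonneg measurableSet_Ioi
  intro x hx
  have := Real.cos_le_one (ξ * x)
  exact mul_nonneg (hf'' x hx) (by linarith)
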